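/- arXiv:1305.0363 — 2 statements merged into one kernel-verified Lean document; each statement's English description precedes it below -/
import Mathlib

section
/- Let k ≥ 2 and let H be a self k-resolved connected graph of order n2. Then for any n1 ≥ 2, dim(K_{n1} ⊠ H) ≤ (n1 − 1)·n2. -/
open SimpleGraph

/-- The strong product of two simple graphs. -/
def strongProd {α β : Type*} (G : SimpleGraph α) (H : SimpleGraph β) :
    SimpleGraph (α × β) where
  Adj x y := x ≠ y ∧ (x.1 = y.1 ∨ G.Adj x.1 y.1) ∧ (x.2 = y.2 ∨ H.Adj x.2 y.2)
  symm := by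
    constructor
    rintro ⟨a, b⟩ ⟨c, d⟩ ⟨hne, h1, h2⟩
    refine ⟨hne.symm, ?_, ?_⟩
    · rcases h1 with h | h
      · exact Or.inl h.symm
      · exact Or.inr h.symm
    · rcases h2 with h | h
      · exact Or.inl h.symm
      · exact Or.inr h.symm
  loopless := by constructor; rintro ⟨a, b⟩ ⟨hne, -, -⟩; exact hne rfl

/-- A set `S` is a metric generator for `G` if every pair of distinct vertices is
distinguished by some element of `S`. -/
def IsMetricGen {α : Type*} (G : SimpleGraph α) (S : Set α) : Prop :=
  ∀ x y : α, x ≠ y → ∃ s ∈ S, G.dist x s ≠ G.dist y s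

/-- The metric dimension of a graph: minimum cardinality of a metric generator. -/
noncomputable def metricDim {α : Type*} (G : SimpleGraph α) : ℕ :=
  sInf {n | ∃ S : Set α, IsMetricGen G S ∧ S.ncard = n}

/-- `G` is self `k`-resolved if for all distinct `x, y` there is `w` such that
`d(y,w) ≥ k` and `x` lies on a shortest `y`–`w` path, or symmetrically. -/
def SelfResolved {α : Type*} (G : SimpleGraph α) (k : ℕ) : Prop :=
  ∀ x y : α, x ≠ y → ∃ w : α,
    (k ≤ G.dist y w ∧ G.dist y x + G.dist x w = G.dist y w) ∨
    (k ≤ G.dist x w ∧ G.dist x y + G.dist y w = G.dist x w)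

/-- Two vertices are true twins if their closed neighborhoods coincide. -/
def TrueTwins {α : Type*} (G : SimpleGraph α) (u v : α) : Prop :=
  insert u (G.neighborSet u) = insert v (G.neighborSet v)

/-- The number of equivalence classes of the true twin relation. -/
noncomputable def numTrueTwinClasses {α : Type*} (G : SimpleGraph α) : ℕ :=
  Nat.card (Quotient (Setoid.ker (fun v => insert v (G.neighborSet v))))

section Helpers

variable {α β : Type*} {G : SimpleGraph α} {H : SimpleGraph β}

lemma sp_walk_fst {a c : α} (p : G.Walk a c) (b : β) :
    ∃ w : (strongProd G H).Walk (a, b) (c, b), w.length = p.length := by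
  induction p with
  | nil => exact ⟨.nil, rfl⟩
  | @cons u v z h p ih =>
    obtain ⟨w, hw⟩ := ih
    refine ⟨Walk.cons (v := (v, b)) ⟨fun he => h.ne (congrArg Prod.fst he), Or.inr h, Or.inl rfl⟩ w, by exact congrArg (· + 1) hw⟩

lemma sp_walk_snd {b d : β} (q : H.Walk b d) (a : α) :
    ∃ w : (strongProd G H).Walk (a, b) (a, d), w.length = q.length := by
  induction q with
  | nil => exact ⟨.nil, rfl⟩
  | @cons u v z h q ih =>
    obtain ⟨w, hw⟩ := ih
    refine ⟨Walk.cons (v := (a, v)) ⟨fun he => h.ne (congrArg Prod.snd he), Or.inl rfl, Or.inr h⟩ w, by exact congrArg (· + 1) hw⟩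

lemma sp_walk_diag : ∀ {a c : α} {b d : β} (p : G.Walk a c) (q : H.Walk b d),
    ∃ w : (strongProd G H).Walk (a, b) (c, d), w.length = max p.length q.length := by
  intro a c b d p
  induction p generalizing b d with
  | @nil a0 =>
    intro q
    obtain ⟨w, hw⟩ := sp_walk_snd (G := G) q a0
    exact ⟨w, by simp [hw]⟩
  | cons h p ih =>
    intro q
    cases q with
    | nil =>
      obtain ⟨w, hw⟩ := sp_walk_fst (H := H) (Walk.cons h p) b
      exact ⟨w, by simp [hw]⟩
    | @cons b v d h' q' =>
      rename_i a2 c2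
      obtain ⟨w, hw⟩ := ih q'
      refine ⟨Walk.cons (v := (a2, v)) ⟨fun he => h.ne (congrArg Prod.fst he), Or.inr h, Or.inr h'⟩ w, ?_⟩
      show w.length + 1 = _
      simp [hw]

lemma sp_dist_fst_le (hG : G.Connected) : ∀ {x y : α × β}
    (w : (strongProd G H).Walk x y), G.dist x.1 y.1 ≤ w.length := by
  intro x y w
  induction w with
  | nil => simp
  | @cons u v z h p ih =>
    have h1 : G.dist u.1 v.1 ≤ 1 := by
      rcases h.2.1 with he | ha
      · simp [he, SimpleGraph.dist_self]
      · simpa using dist_le ha.toWalk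
    have := hG.dist_triangle (u := u.1) (v := v.1) (w := z.1)
    simp only [Walk.length_cons]
    omega

lemma sp_dist_snd_le (hH : H.Connected) : ∀ {x y : α × β}
    (w : (strongProd G H).Walk x y), H.dist x.2 y.2 ≤ w.length := by
  intro x y w
  induction w with
  | nil => simp
  | @cons u v z h p ih =>
    have h1 : H.dist u.2 v.2 ≤ 1 := by
      rcases h.2.2 with he | ha
      · simp [he, SimpleGraph.dist_self]
      · simpa using dist_le ha.toWalk
    have := hH.dist_triangle (u := u.2) (v := v.2) (w := z.2)
    simp only [Walk.length_cons]
    omega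

lemma sp_dist (hG : G.Connected) (hH : H.Connected) (a c : α) (b d : β) :
    (strongProd G H).dist (a, b) (c, d) = max (G.dist a c) (H.dist b d) := by
  obtain ⟨p, hp⟩ := (hG.preconnected a c).exists_walk_length_eq_dist
  obtain ⟨q, hq⟩ := (hH.preconnected b d).exists_walk_length_eq_dist
  obtain ⟨w, hw⟩ := sp_walk_diag p q
  apply le_antisymm
  · calc (strongProd G H).dist (a, b) (c, d) ≤ w.length := dist_le w
    _ = _ := by rw [hw, hp, hq]
  · obtain ⟨w', hw'⟩ := (Walk.reachable w).exists_walk_length_eq_dist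
    have h1 := sp_dist_fst_le (H := H) hG w'
    have h2 := sp_dist_snd_le (G := G) hH w'
    simp only [hw'] at h1 h2
    omega

lemma ncard_S {n1 : ℕ} {β : Type*} [Fintype β] (i0 : Fin n1) :
    ({p : Fin n1 × β | p.1 ≠ i0}).ncard = (n1 - 1) * Fintype.card β := by
  rw [← Nat.card_coe_set_eq]
  have : Nat.card ({p : Fin n1 × β | p.1 ≠ i0}) =
      Nat.card ({i : Fin n1 // i ≠ i0} × β) :=
    Nat.card_congr (Equiv.prodSubtypeFstEquivSubtypeProd (p := fun i => i ≠ i0))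
  rw [this, Nat.card_prod, Nat.card_eq_fintype_card, Nat.card_eq_fintype_card]
  congr 1
  have := Fintype.card_subtype_compl (fun i : Fin n1 => i = i0)
  simp [Fintype.card_subtype_eq] at this
  simpa using this


end Helpers

theorem stmt_6 {β : Type*} [Fintype β] (H : SimpleGraph β) (k n1 : ℕ)
    (hk : 2 ≤ k) (hH : H.Connected) (hres : SelfResolved H k) (hn1 : 2 ≤ n1) :
    metricDim (strongProd (⊤ : SimpleGraph (Fin n1)) H) ≤ (n1 - 1) * Fintype.card β := by
  haveI : Nonempty (Fin n1) := ⟨⟨0, by omega⟩⟩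
  set G : SimpleGraph (Fin n1) := ⊤ with hGdef
  have hG : G.Connected := connected_top
  have hd := sp_dist hG hH
  have hkd1 : ∀ a c : Fin n1, G.dist a c ≤ 1 := by
    intro a c
    by_cases h : a = c
    · simp [h, SimpleGraph.dist_self]
    · simpa using dist_le ((top_adj a c).mpr h).toWalk
  have hkd0 : ∀ a c : Fin n1, G.dist a c = 0 ↔ a = c := fun a c => hG.dist_eq_zero_iff
  have hHd0 : ∀ b d : β, H.dist b d = 0 ↔ b = d := fun b d => hH.dist_eq_zero_iff
  set i0 : Fin n1 := ⟨0, by omega⟩ with hi0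
  set i1 : Fin n1 := ⟨1, by omega⟩ with hi1
  have hi01 : i1 ≠ i0 := by simp [hi0, hi1, Fin.ext_iff]
  apply Nat.sInf_le
  refine ⟨{p : Fin n1 × β | p.1 ≠ i0}, ?_, ncard_S i0⟩
  rintro ⟨a, b⟩ ⟨c, d⟩ hxy
  by_cases hbd : b = d
  · subst hbd
    have hac : a ≠ c := fun h => hxy (by rw [h])
    by_cases h : a = i0
    · refine ⟨(c, b), fun hc => hac (h.trans hc.symm), ?_⟩
      rw [hd, hd]
      have h1 : G.dist a c ≠ 0 := fun h0 => hac ((hkd0 a c).mp h0)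
      simp only [SimpleGraph.dist_self]
      omega
    · refine ⟨(a, b), h, ?_⟩
      rw [hd, hd]
      have h1 : G.dist c a ≠ 0 := fun h0 => hac ((hkd0 c a).mp h0).symm
      simp only [SimpleGraph.dist_self]
      omega
  · obtain ⟨w, hcase⟩ := hres b d hbd
    refine ⟨(i1, w), hi01, ?_⟩
    rw [hd, hd]
    have h1 := hkd1 a i1
    have h2 := hkd1 c i1
    have hdb : H.dist d b ≠ 0 := fun h0 => hbd ((hHd0 d b).mp h0).symm
    have hbd' : H.dist b d ≠ 0 := fun h0 => hbd ((hHd0 b d).mp h0)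
    rcases hcase with ⟨hkle, heq⟩ | ⟨hkle, heq⟩ <;> omega
end

section
/- Let G and H be nontrivial connected graphs of orders n1 and n2 having t1 and t2 true twin equivalence classes, respectively. Then dim(G ⊠ H) ≥ n1·n2 − t1·t2. -/
open SimpleGraph

section Aux

variable {α β : Type*}

/-- true twins (with distinct endpoints avoided) have equal distances. -/
lemma dist_le_of_twins {G : SimpleGraph α} (hG : G.Connected)
    {p q s : α} (h : insert p (G.neighborSet p) = insert q (G.neighborSet q))
    (hqs : s ≠ q) : G.dist p s ≤ G.dist q s := by
  obtain ⟨W, hW⟩ := hG.exists_walk_length_eq_dist q s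
  cases W with
  | nil => exact absurd rfl hqs.symm
  | cons hadj tail =>
    rename_i w
    have hw : w ∈ insert p (G.neighborSet p) := by
      rw [h]; exact Set.mem_insert_iff.mpr (Or.inr hadj)
    have htail : G.dist w s ≤ tail.length := SimpleGraph.dist_le tail
    simp only [SimpleGraph.Walk.length_cons] at hW
    rcases Set.mem_insert_iff.mp hw with hw | hw
    · subst hw
      have := SimpleGraph.dist_le tail
      omega
    · have h1 : G.dist p w = 1 := SimpleGraph.dist_eq_one_iff_adj.mpr hw
      have := hG.dist_triangle (u := p) (v := w) (w := s)
      omega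

lemma dist_eq_of_twins {G : SimpleGraph α} (hG : G.Connected)
    {p q s : α} (h : insert p (G.neighborSet p) = insert q (G.neighborSet q))
    (hps : s ≠ p) (hqs : s ≠ q) : G.dist p s = G.dist q s :=
  le_antisymm (dist_le_of_twins hG h hqs) (dist_le_of_twins hG h.symm hps)

/-- closed neighborhood of the strong product is the product of closed nbhds. -/
lemma strongProd_closedNbhd (G : SimpleGraph α) (H : SimpleGraph β) (p : α × β) :
    insert p ((strongProd G H).neighborSet p) =
      (insert p.1 (G.neighborSet p.1)) ×ˢ (insert p.2 (H.neighborSet p.2)) := by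
  obtain ⟨a, b⟩ := p
  ext ⟨c, d⟩
  simp only [Set.mem_insert_iff, SimpleGraph.mem_neighborSet, Set.mem_prod, Prod.mk.injEq,
    strongProd, ne_eq]
  constructor
  · rintro (⟨rfl, rfl⟩ | ⟨hne, h1, h2⟩)
    · exact ⟨Or.inl rfl, Or.inl rfl⟩
    · exact ⟨h1.imp Eq.symm id, h2.imp Eq.symm id⟩
  · rintro ⟨h1, h2⟩
    by_cases he : a = c ∧ b = d
    · obtain ⟨rfl, rfl⟩ := he
      exact Or.inl ⟨rfl, rfl⟩
    · exact Or.inr ⟨he, h1.imp Eq.symm id, h2.imp Eq.symm id⟩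

/-- lift a walk in the first coordinate -/
def homFst (G : SimpleGraph α) (H : SimpleGraph β) (b : β) : G →g strongProd G H where
  toFun a := (a, b)
  map_rel' := by
    intro a a' h
    exact ⟨by simp [h.ne], Or.inr h, Or.inl rfl⟩

def homSnd (G : SimpleGraph α) (H : SimpleGraph β) (a : α) : H →g strongProd G H where
  toFun b := (a, b)
  map_rel' := by
    intro b b' h
    exact ⟨by simp [h.ne], Or.inl rfl, Or.inr h⟩

lemma strongProd_connected {G : SimpleGraph α} {H : SimpleGraph β}
    (hG : G.Connected) (hH : H.Connected) : (strongProd G H).Connected := by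
  have : Nonempty α := hG.nonempty
  have : Nonempty β := hH.nonempty
  rw [SimpleGraph.connected_iff]
  refine ⟨?_, inferInstance⟩
  rintro ⟨a, b⟩ ⟨c, d⟩
  have h1 : (strongProd G H).Reachable (a, b) (c, b) := (hG a c).map (homFst G H b)
  have h2 : (strongProd G H).Reachable (c, b) (c, d) := (hH b d).map (homSnd G H c)
  exact h1.trans h2

end Aux

theorem stmt_8 {α β : Type*} [Fintype α] [Fintype β] [Nontrivial α] [Nontrivial β]
    (G : SimpleGraph α) (H : SimpleGraph β) (hG : G.Connected) (hH : H.Connected) :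
    Fintype.card α * Fintype.card β - numTrueTwinClasses G * numTrueTwinClasses H ≤
      metricDim (strongProd G H) := by
  have hP : (strongProd G H).Connected := strongProd_connected hG hH
  -- the set in the sInf is nonempty: univ is a metric generator
  have hne : ∃ n, n ∈ {n | ∃ S : Set (α × β), IsMetricGen (strongProd G H) S ∧ S.ncard = n} := by
    refine ⟨(Set.univ : Set (α × β)).ncard, Set.univ, ?_, rfl⟩
    intro x y hxy
    refine ⟨x, Set.mem_univ x, ?_⟩
    rw [SimpleGraph.dist_self]
    intro hc
    exact hxy (hP.dist_eq_zero_iff.mp hc.symm).symm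
  rw [metricDim]
  refine le_csInf ⟨_, hne.choose_spec⟩ ?_
  rintro n ⟨S, hS, rfl⟩
  -- key: Sᶜ injects into range fG × range fH
  set fG : α → Set α := fun v => insert v (G.neighborSet v) with hfG
  set fH : β → Set β := fun v => insert v (H.neighborSet v) with hfH
  have hinj : Set.InjOn (fun p : α × β => (fG p.1, fH p.2)) Sᶜ := by
    rintro ⟨a, b⟩ h1 ⟨c, d⟩ h2 heq
    by_contra hne'
    have htw : insert (a, b) ((strongProd G H).neighborSet (a, b)) =
        insert (c, d) ((strongProd G H).neighborSet (c, d)) := by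
      rw [strongProd_closedNbhd, strongProd_closedNbhd]
      have e1 : fG a = fG c := congrArg Prod.fst heq
      have e2 : fH b = fH d := congrArg Prod.snd heq
      simp only [hfG, hfH] at e1 e2
      rw [e1, e2]
    obtain ⟨s, hsS, hsd⟩ := hS _ _ hne'
    apply hsd
    have hs1 : s ≠ (a, b) := fun h => h1 (h ▸ hsS)
    have hs2 : s ≠ (c, d) := fun h => h2 (h ▸ hsS)
    exact dist_eq_of_twins hP htw hs1 hs2
  -- cardinality bound on Sᶜ
  have hcard : (Sᶜ : Set (α × β)).ncard ≤ numTrueTwinClasses G * numTrueTwinClasses H := by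
    have h1 : numTrueTwinClasses G = Nat.card (Set.range fG) :=
      Nat.card_congr (Setoid.quotientKerEquivRange fG)
    have h2 : numTrueTwinClasses H = Nat.card (Set.range fH) :=
      Nat.card_congr (Setoid.quotientKerEquivRange fH)
    rw [h1, h2, ← Nat.card_prod]
    rw [← Nat.card_coe_set_eq]
    have : Function.Injective (fun p : (Sᶜ : Set (α × β)) =>
        ((⟨fG p.1.1, Set.mem_range_self _⟩, ⟨fH p.1.2, Set.mem_range_self _⟩) :
          Set.range fG × Set.range fH)) := by
      rintro ⟨p, hp⟩ ⟨q, hq⟩ h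
      simp only [Prod.mk.injEq, Subtype.mk.injEq] at h
      exact Subtype.ext (hinj hp hq (Prod.ext h.1 h.2))
    exact Nat.card_le_card_of_injective _ this
  have htot : S.ncard + (Sᶜ : Set (α × β)).ncard = Fintype.card α * Fintype.card β := by
    rw [Set.ncard_add_ncard_compl, Nat.card_eq_fintype_card, Fintype.card_prod]
  omega
end
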